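/- For every b > 0 there exists a constant C > 0, depending only on b, with the following property: for every R > 0 and every continuous nonnegative function L : [0,R) → ℝ with L(0) = 0 satisfying hypothesis (★_b) on [0,R), one has ∫₀^t L(r) dr ≤ C·e^{bt} for all t ∈ (0,R). -/

import Mathlib

open Real MeasureTheory intervalIntegral Set

/-- Hypothesis (★_b): for all `η, t` with `0 < η ≤ t < R`,
`(3/η²)·∫_{t−η}^{t} e^{−br}·L(r) dr + (7b/η²)·∫_{t−η}^{t} (t−r)·e^{−br}·L(r) dr
  ≤ 4π + (4/η)·e^{−b(t−η)}·L(t−η)`. -/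
def StarHyp (b R : ℝ) (L : ℝ → ℝ) : Prop :=
  ∀ η t : ℝ, 0 < η → η ≤ t → t < R →
    (3 / η ^ 2) * (∫ r in (t - η)..t, Real.exp (-b * r) * L r)
      + (7 * b / η ^ 2) * (∫ r in (t - η)..t, (t - r) * Real.exp (-b * r) * L r)
    ≤ 4 * Real.pi + (4 / η) * Real.exp (-b * (t - η)) * L (t - η)

set_option maxHeartbeats 1000000 in
theorem stmt_7 (b : ℝ) (hb : 0 < b) :
    ∃ C : ℝ, 0 < C ∧
      ∀ (R : ℝ) (L : ℝ → ℝ), 0 < R →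
        ContinuousOn L (Set.Ico (0:ℝ) R) →
        (∀ r ∈ Set.Ico (0:ℝ) R, 0 ≤ L r) →
        L 0 = 0 →
        StarHyp b R L →
        ∀ t ∈ Set.Ioo (0:ℝ) R,
          (∫ r in (0:ℝ)..t, L r) ≤ C * Real.exp (b * t) := by
  have hexp3 : Real.exp (-3) < 1 := by rw [Real.exp_lt_one_iff]; norm_num
  have hden : (0:ℝ) < 1 - Real.exp (-3) := by linarith
  obtain ⟨h, hh⟩ : ∃ h : ℝ, h = 3 / b := ⟨_, rfl⟩
  have hhpos : 0 < h := by rw [hh]; positivity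
  have hbh : b * h = 3 := by rw [hh]; field_simp
  obtain ⟨C, hCdef⟩ : ∃ C : ℝ, C = 316 * π / 9 * h ^ 2 / (1 - Real.exp (-3)) := ⟨_, rfl⟩
  have hCpos : 0 < C := by rw [hCdef]; positivity
  have hCkey : C * Real.exp (-3) + 316 * π / 9 * h ^ 2 = C := by
    rw [hCdef]; field_simp; ring
  refine ⟨C, hCpos, ?_⟩
  intro R L hR hLc hLnn hL0 hstar T hT
  obtain ⟨hT0, hTR⟩ := hT
  -- clamped function
  obtain ⟨c, hc⟩ : ∃ c : ℝ → ℝ, c = fun r => max 0 (min r T) := ⟨_, rfl⟩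
  have hccont : Continuous c := by
    rw [hc]; exact continuous_const.max (continuous_id.min continuous_const)
  have hcmem : ∀ r, c r ∈ Set.Ico (0:ℝ) R := by
    intro r
    refine ⟨by rw [hc]; exact le_max_left _ _, ?_⟩
    have : c r ≤ T := by rw [hc]; exact max_le (le_of_lt hT0) (min_le_right _ _)
    linarith
  have hcid : ∀ r, 0 ≤ r → r ≤ T → c r = r := by
    intro r h0 h1
    rw [hc]; simp only [min_eq_left h1, max_eq_right h0]
  have hcneg : ∀ r ≤ 0, c r = 0 := by
    intro r hr
    rw [hc]; exact max_eq_left (le_trans (min_le_left _ _) hr)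
  obtain ⟨G, hGdef⟩ : ∃ G : ℝ → ℝ, G = fun r => Real.exp (-b * r) * L (c r) := ⟨_, rfl⟩
  have hGcont : Continuous G := by
    rw [hGdef]
    exact ((Real.continuous_exp.comp (continuous_const.mul continuous_id))).mul
      (hLc.comp_continuous hccont hcmem)
  have hGnn : ∀ r, 0 ≤ G r := by
    intro r
    rw [hGdef]
    exact mul_nonneg (le_of_lt (Real.exp_pos _)) (hLnn _ (hcmem r))
  have hGzero : ∀ r ≤ 0, G r = 0 := by
    intro r hr
    rw [hGdef]; simp [hcneg r hr, hL0]
  have hGeq : ∀ r, 0 ≤ r → r ≤ T → G r = Real.exp (-b * r) * L r := by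
    intro r h0 h1; rw [hGdef]; simp [hcid r h0 h1]
  have hInt : ∀ a d : ℝ, IntervalIntegrable G volume a d :=
    fun a d => hGcont.intervalIntegrable a d
  obtain ⟨F, hFdef⟩ : ∃ F : ℝ → ℝ, F = fun x => ∫ r in (0:ℝ)..x, G r := ⟨_, rfl⟩
  have hFadd : ∀ a d : ℝ, F d - F a = ∫ r in a..d, G r := by
    intro a d
    have := integral_add_adjacent_intervals (hInt 0 a) (hInt a d)
    rw [hFdef]; dsimp only; linarith
  have hFmono : ∀ a d : ℝ, a ≤ d → F a ≤ F d := by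
    intro a d had
    have h1 : 0 ≤ ∫ r in a..d, G r :=
      intervalIntegral.integral_nonneg had (fun u _ => hGnn u)
    have := hFadd a d; linarith
  have hF00 : F 0 = 0 := by rw [hFdef]; simp
  have hF0 : ∀ x ≤ 0, F x = 0 := by
    intro x hx
    have h1 : F 0 - F x = ∫ r in x..(0:ℝ), G r := hFadd x 0
    have h2 : (∫ r in x..(0:ℝ), G r) = ∫ r in x..(0:ℝ), (0:ℝ) := by
      apply intervalIntegral.integral_congr
      intro r hr
      rw [Set.uIcc_of_le hx] at hr
      exact hGzero r hr.2
    rw [intervalIntegral.integral_const] at h2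
    simp at h2
    rw [h2] at h1
    linarith [hF00]
  have hFnn : ∀ x, 0 ≤ F x := by
    intro x
    rcases le_or_gt x 0 with hx | hx
    · rw [hF0 x hx]
    · rw [← hF00]; exact hFmono 0 x (le_of_lt hx)
  -- StarHyp in G form, multiplied by η²
  have hstarG : ∀ η t : ℝ, 0 < η → η ≤ t → t ≤ T →
      3 * (∫ r in t-η..t, G r) + 7 * b * (∫ r in t-η..t, (t-r) * G r)
        ≤ 4 * π * η^2 + 4 * η * G (t-η) := by
    intro η t hη hηt htT
    have htR' : t < R := lt_of_le_of_lt htT hTR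
    have h0tη : 0 ≤ t - η := by linarith
    have hs := hstar η t hη hηt htR'
    have e1 : (∫ r in t-η..t, Real.exp (-b * r) * L r) = ∫ r in t-η..t, G r := by
      apply intervalIntegral.integral_congr
      intro r hr
      rw [Set.uIcc_of_le (by linarith : t - η ≤ t)] at hr
      rw [hGeq r (by linarith [hr.1]) (by linarith [hr.2])]
    have e2 : (∫ r in t-η..t, (t - r) * Real.exp (-b * r) * L r)
        = ∫ r in t-η..t, (t - r) * G r := by
      apply intervalIntegral.integral_congr
      intro r hr
      rw [Set.uIcc_of_le (by linarith : t - η ≤ t)] at hr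
      show (t - r) * Real.exp (-b * r) * L r = (t - r) * G r
      rw [hGeq r (by linarith [hr.1]) (by linarith [hr.2])]
      ring
    have e3 : (4 / η) * Real.exp (-b * (t - η)) * L (t - η) = 4 / η * G (t-η) := by
      rw [hGeq (t-η) h0tη (by linarith)]; ring
    rw [e1, e2, e3] at hs
    have hne : η ≠ 0 := ne_of_gt hη
    have hmul := mul_le_mul_of_nonneg_left hs (sq_nonneg η)
    have e4 : η^2 * ((3 / η ^ 2) * (∫ r in t-η..t, G r)
        + (7 * b / η ^ 2) * (∫ r in t-η..t, (t-r) * G r))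
        = 3 * (∫ r in t-η..t, G r) + 7 * b * (∫ r in t-η..t, (t-r) * G r) := by
      field_simp
      try ring
    have e5 : η^2 * (4 * π + 4 / η * G (t-η)) = 4 * π * η^2 + 4 * η * G (t-η) := by
      field_simp
      try ring
    rw [← e4, ← e5]
    exact hmul
  -- Lemma A : F s ≤ (4π/3) s²
  have hA : ∀ s : ℝ, 0 ≤ s → s ≤ T → F s ≤ 4 * π / 3 * s^2 := by
    intro s h0 h1
    rcases eq_or_lt_of_le h0 with rfl | hs
    · rw [hF00]; positivity
    · have hs2 := hstarG s s hs le_rfl h1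
      rw [sub_self] at hs2
      have hG0 : G 0 = 0 := hGzero 0 le_rfl
      have hI1 : F s = ∫ r in (0:ℝ)..s, G r := by
        have := hFadd 0 s; rw [hF00] at this; linarith
      have hI2 : 0 ≤ ∫ r in (0:ℝ)..s, (s - r) * G r := by
        apply intervalIntegral.integral_nonneg (le_of_lt hs)
        intro u hu
        exact mul_nonneg (by linarith [hu.2]) (hGnn u)
      have h7b : 0 ≤ 7 * b * ∫ r in (0:ℝ)..s, (s - r) * G r :=
        mul_nonneg (by linarith) hI2
      rw [hG0] at hs2
      rw [hI1]
      linarith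
  -- Lemma C : window recursion
  have hC : ∀ s : ℝ, 2*h ≤ s → s + h ≤ T →
      F s - F (s-h) ≤ 19*π/18*h^2 + (1/2)*(F (s-h) - F (s-2*h)) := by
    intro s h2h hsT
    have hIc : Continuous (fun r => (s+h-r) * G r) :=
      (continuous_const.sub continuous_id).mul hGcont
    have hcont1 : Continuous (fun η : ℝ => 4*η*G (s+h-η)) :=
      (continuous_const.mul continuous_id).mul
        (hGcont.comp (continuous_const.sub continuous_id))
    have hcont2 : Continuous (fun η : ℝ => 12*h*G (s+h-η)) :=
      continuous_const.mul (hGcont.comp (continuous_const.sub continuous_id))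
    have hcont3 : Continuous (fun η : ℝ => 4*π*η^2) :=
      continuous_const.mul (continuous_pow 2)
    have hcont4 : Continuous (fun η : ℝ => 4*π*η^2 + 4*η*G (s+h-η)) := hcont3.add hcont1
    have hpt : ∀ η ∈ Set.Icc (2*h) (3*h),
        3*(F (s+h) - F (s-h)) + 21*(F s - F (s-h))
          ≤ 4*π*η^2 + 4*η*G (s+h-η) := by
      intro η hηm
      obtain ⟨hη1, hη2⟩ := hηm
      have hηpos : 0 < η := by linarith
      have key := hstarG η (s+h) hηpos (by linarith) (by linarith)
      have k1 : F (s+h) - F (s-h) ≤ ∫ r in (s+h-η)..(s+h), G r := by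
        rw [← hFadd (s+h-η) (s+h)]
        have := hFmono (s+h-η) (s-h) (by linarith)
        linarith
      have k2 : h * (F s - F (s-h)) ≤ ∫ r in (s+h-η)..(s+h), (s+h-r) * G r := by
        have add1 := integral_add_adjacent_intervals
          (hIc.intervalIntegrable (μ := volume) (s+h-η) (s-h)) (hIc.intervalIntegrable (s-h) (s+h))
        have add2 := integral_add_adjacent_intervals
          (hIc.intervalIntegrable (μ := volume) (s-h) s) (hIc.intervalIntegrable s (s+h))
        have pa : 0 ≤ ∫ r in (s+h-η)..(s-h), (s+h-r)*G r :=
          intervalIntegral.integral_nonneg (by linarith)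
            (fun u hu => mul_nonneg (by linarith [hu.2]) (hGnn u))
        have pc : 0 ≤ ∫ r in s..(s+h), (s+h-r)*G r :=
          intervalIntegral.integral_nonneg (by linarith)
            (fun u hu => mul_nonneg (by linarith [hu.2]) (hGnn u))
        have pb : h * (F s - F (s-h)) ≤ ∫ r in (s-h)..s, (s+h-r)*G r := by
          have hmono : (∫ r in (s-h)..s, h * G r) ≤ ∫ r in (s-h)..s, (s+h-r)*G r := by
            apply intervalIntegral.integral_mono_on (by linarith)
              ((continuous_const.mul hGcont).intervalIntegrable _ _)
              (hIc.intervalIntegrable _ _)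
            intro u hu
            exact mul_le_mul_of_nonneg_right (by linarith [hu.2]) (hGnn u)
          rwa [intervalIntegral.integral_const_mul, ← hFadd] at hmono
        linarith
      have k2m := mul_le_mul_of_nonneg_left k2 (by linarith : (0:ℝ) ≤ 7*b)
      have e21 : 7*b*(h*(F s - F (s-h))) = 21*(F s - F (s-h)) := by
        linear_combination 7*(F s - F (s-h))*hbh
      linarith
    have hint : (∫ η in (2*h)..(3*h),
          (3*(F (s+h) - F (s-h)) + 21*(F s - F (s-h))))
        ≤ ∫ η in (2*h)..(3*h), (4*π*η^2 + 4*η*G (s+h-η)) := by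
      apply intervalIntegral.integral_mono_on (by linarith)
        (continuous_const.intervalIntegrable (μ := volume) _ _) (hcont4.intervalIntegrable _ _) hpt
    have eL : (∫ η in (2*h)..(3*h),
          (3*(F (s+h) - F (s-h)) + 21*(F s - F (s-h))))
        = h * (3*(F (s+h) - F (s-h)) + 21*(F s - F (s-h))) := by
      rw [intervalIntegral.integral_const]; rw [smul_eq_mul]; ring
    have hsplit : (∫ η in (2*h)..(3*h), (4*π*η^2 + 4*η*G (s+h-η)))
        = (∫ η in (2*h)..(3*h), 4*π*η^2) + ∫ η in (2*h)..(3*h), 4*η*G (s+h-η) := by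
      exact intervalIntegral.integral_add (hcont3.intervalIntegrable _ _)
        (hcont1.intervalIntegrable _ _)
    have e6 : (∫ η in (2*h)..(3*h), 4*π*η^2) = 76*π*h^3/3 := by
      rw [intervalIntegral.integral_const_mul, integral_pow]; ring
    have e7 : (∫ η in (2*h)..(3*h), 4*η*G (s+h-η))
        ≤ ∫ η in (2*h)..(3*h), 12*h*G (s+h-η) := by
      apply intervalIntegral.integral_mono_on (by linarith)
        (hcont1.intervalIntegrable _ _) (hcont2.intervalIntegrable _ _)
      intro u hu
      exact mul_le_mul_of_nonneg_right (by linarith [hu.2]) (hGnn _)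
    have e8 : (∫ η in (2*h)..(3*h), 12*h*G (s+h-η))
        = 12*h*(F (s-h) - F (s-2*h)) := by
      rw [intervalIntegral.integral_const_mul,
        intervalIntegral.integral_comp_sub_left G (s+h)]
      rw [show s+h-3*h = s-2*h from by ring, show s+h-2*h = s-h from by ring]
      rw [← hFadd (s-2*h) (s-h)]
    have hms := hFmono s (s+h) (by linarith)
    have main : h*(24*(F s - F (s-h)))
        ≤ h*(24*(19*π/18*h^2 + (1/2)*(F (s-h) - F (s-2*h)))) := by
      linarith [hint, eL, hsplit, e6, e7, e8,
        mul_le_mul_of_nonneg_left hms hhpos.le]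
    have := (mul_le_mul_iff_right₀ hhpos).mp main
    linarith
  -- Lemma B : top window bound
  have hB : ∀ t : ℝ, 2*h ≤ t → t ≤ T →
      F t - F (t-h) ≤ 28*π/9*h^2 + (8/3)*(F (t-h) - F (t-2*h)) := by
    intro t h2t htT
    have hcont1 : Continuous (fun η : ℝ => 4*η*G (t-η)) :=
      (continuous_const.mul continuous_id).mul
        (hGcont.comp (continuous_const.sub continuous_id))
    have hcont2 : Continuous (fun η : ℝ => 8*h*G (t-η)) :=
      continuous_const.mul (hGcont.comp (continuous_const.sub continuous_id))
    have hcont3 : Continuous (fun η : ℝ => 4*π*η^2) :=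
      continuous_const.mul (continuous_pow 2)
    have hcont4 : Continuous (fun η : ℝ => 4*π*η^2 + 4*η*G (t-η)) := hcont3.add hcont1
    have hpt : ∀ η ∈ Set.Icc h (2*h),
        3*(F t - F (t-h)) ≤ 4*π*η^2 + 4*η*G (t-η) := by
      intro η hηm
      obtain ⟨hη1, hη2⟩ := hηm
      have hηpos : 0 < η := by linarith
      have key := hstarG η t hηpos (by linarith) htT
      have k1 : F t - F (t-h) ≤ ∫ r in (t-η)..t, G r := by
        rw [← hFadd (t-η) t]
        have := hFmono (t-η) (t-h) (by linarith)
        linarith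
      have k2 : 0 ≤ ∫ r in (t-η)..t, (t-r)*G r :=
        intervalIntegral.integral_nonneg (by linarith)
          (fun u hu => mul_nonneg (by linarith [hu.2]) (hGnn u))
      have k2m : 0 ≤ 7*b*∫ r in (t-η)..t, (t-r)*G r :=
        mul_nonneg (by linarith) k2
      linarith
    have hint : (∫ η in h..(2*h), (3*(F t - F (t-h))))
        ≤ ∫ η in h..(2*h), (4*π*η^2 + 4*η*G (t-η)) := by
      apply intervalIntegral.integral_mono_on (by linarith)
        (continuous_const.intervalIntegrable (μ := volume) _ _) (hcont4.intervalIntegrable _ _) hpt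
    have eL : (∫ η in h..(2*h), (3*(F t - F (t-h)))) = h * (3*(F t - F (t-h))) := by
      rw [intervalIntegral.integral_const]; rw [smul_eq_mul]; ring
    have hsplit : (∫ η in h..(2*h), (4*π*η^2 + 4*η*G (t-η)))
        = (∫ η in h..(2*h), 4*π*η^2) + ∫ η in h..(2*h), 4*η*G (t-η) := by
      exact intervalIntegral.integral_add (hcont3.intervalIntegrable _ _)
        (hcont1.intervalIntegrable _ _)
    have e6 : (∫ η in h..(2*h), 4*π*η^2) = 28*π*h^3/3 := by
      rw [intervalIntegral.integral_const_mul, integral_pow]; ring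
    have e7 : (∫ η in h..(2*h), 4*η*G (t-η)) ≤ ∫ η in h..(2*h), 8*h*G (t-η) := by
      apply intervalIntegral.integral_mono_on (by linarith)
        (hcont1.intervalIntegrable _ _) (hcont2.intervalIntegrable _ _)
      intro u hu
      exact mul_le_mul_of_nonneg_right (by linarith [hu.2]) (hGnn _)
    have e8 : (∫ η in h..(2*h), 8*h*G (t-η)) = 8*h*(F (t-h) - F (t-2*h)) := by
      rw [intervalIntegral.integral_const_mul,
        intervalIntegral.integral_comp_sub_left G t]
      rw [← hFadd (t-2*h) (t-h)]
    have main : h*(3*(F t - F (t-h)))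
        ≤ h*(3*(28*π/9*h^2 + (8/3)*(F (t-h) - F (t-2*h)))) := by
      linarith [hint, eL, hsplit, e6, e7, e8]
    have := (mul_le_mul_iff_right₀ hhpos).mp main
    linarith
  -- uniform bound on interior windows
  have hM : ∀ n : ℕ, ∀ s : ℝ, 0 ≤ s → s + h ≤ T → s ≤ 3*h + (n:ℝ)*h →
      F s - F (s-h) ≤ 12*π*h^2 := by
    intro n
    induction n with
    | zero =>
      intro s h0 h1 h2
      push_cast at h2
      have hs3 : s ≤ 3*h := by linarith
      have ha := hA s h0 (by linarith)
      have hnn := hFnn (s-h)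
      have hsq : s^2 ≤ 9*h^2 := by nlinarith
      have := mul_le_mul_of_nonneg_left hsq (by positivity : (0:ℝ) ≤ 4*π/3)
      linarith
    | succ n ih =>
      intro s h0 h1 h2
      push_cast at h2
      by_cases hs3 : s ≤ 3*h + (n:ℝ)*h
      · exact ih s h0 h1 hs3
      · push_neg at hs3
        have hnh : (0:ℝ) ≤ (n:ℝ)*h := by positivity
        have hrec := hC s (by linarith) h1
        have hprev := ih (s-h) (by linarith) (by linarith) (by linarith)
        rw [show s-h-h = s-2*h from by ring] at hprev
        linarith [mul_pos pi_pos (pow_pos hhpos 2)]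
  have hMfinal : ∀ s : ℝ, 0 ≤ s → s + h ≤ T → F s - F (s-h) ≤ 12*π*h^2 := by
    intro s h0 h1
    obtain ⟨n, hn⟩ := exists_nat_ge (s/h)
    exact hM n s h0 h1 (by linarith [(div_le_iff₀ hhpos).mp hn])
  -- uniform bound on all windows up to T
  have hW : ∀ t : ℝ, t ≤ T → F t - F (t-h) ≤ 316*π/9*h^2 := by
    intro t htT
    rcases le_or_gt t 0 with h0 | h0
    · rw [hF0 t h0, hF0 (t-h) (by linarith)]
      have : (0:ℝ) ≤ 316*π/9*h^2 := by positivity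
      linarith
    rcases le_or_gt t (2*h) with h2 | h2
    · have ha := hA t (le_of_lt h0) htT
      have hnn := hFnn (t-h)
      have hsq : t^2 ≤ 4*h^2 := by nlinarith
      have := mul_le_mul_of_nonneg_left hsq (by positivity : (0:ℝ) ≤ 4*π/3)
      nlinarith [mul_pos pi_pos (pow_pos hhpos 2)]
    · have hb2 := hB t (le_of_lt h2) htT
      have hm := hMfinal (t-h) (by linarith) (by linarith)
      rw [show t-h-h = t-2*h from by ring] at hm
      linarith [mul_pos pi_pos (pow_pos hhpos 2)]
  -- final exponential bound
  obtain ⟨S, hSdef⟩ : ∃ S : ℝ → ℝ, S = fun x => ∫ r in (0:ℝ)..x, Real.exp (b*r) * G r :=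
    ⟨_, rfl⟩
  have hEcont : Continuous (fun r => Real.exp (b*r) * G r) :=
    (Real.continuous_exp.comp (continuous_const.mul continuous_id)).mul hGcont
  have hSadd : ∀ a d : ℝ, S d - S a = ∫ r in a..d, Real.exp (b*r) * G r := by
    intro a d
    have := integral_add_adjacent_intervals
      (hEcont.intervalIntegrable (μ := volume) 0 a) (hEcont.intervalIntegrable a d)
    rw [hSdef]; dsimp only; linarith
  have hS00 : S 0 = 0 := by rw [hSdef]; simp
  have hS0 : ∀ x ≤ 0, S x = 0 := by
    intro x hx
    have h1 := hSadd x 0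
    have h2 : (∫ r in x..(0:ℝ), Real.exp (b*r) * G r) = ∫ r in x..(0:ℝ), (0:ℝ) := by
      apply intervalIntegral.integral_congr
      intro r hr
      rw [Set.uIcc_of_le hx] at hr
      show Real.exp (b*r) * G r = 0
      rw [hGzero r hr.2]; ring
    rw [intervalIntegral.integral_const] at h2
    simp at h2
    rw [h2] at h1
    linarith [hS00]
  have hSkey : ∀ n : ℕ, ∀ x : ℝ, x ≤ T → x ≤ (n:ℝ)*h → S x ≤ C * Real.exp (b*x) := by
    intro n
    induction n with
    | zero =>
      intro x hxT hx0
      push_cast at hx0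
      rw [hS0 x (by linarith)]
      positivity
    | succ n ih =>
      intro x hxT hxn
      push_cast at hxn
      by_cases hx : x ≤ (n:ℝ)*h
      · exact ih x hxT hx
      · push_neg at hx
        have hnh : (0:ℝ) ≤ (n:ℝ)*h := by positivity
        have hx0 : 0 ≤ x := le_trans hnh (le_of_lt hx)
        have key1 := hSadd (x-h) x
        have key2 : (∫ r in (x-h)..x, Real.exp (b*r) * G r)
            ≤ ∫ r in (x-h)..x, Real.exp (b*x) * G r := by
          apply intervalIntegral.integral_mono_on (by linarith)
            (hEcont.intervalIntegrable _ _)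
            ((continuous_const.mul hGcont).intervalIntegrable _ _)
          intro u hu
          exact mul_le_mul_of_nonneg_right
            (Real.exp_le_exp.mpr (mul_le_mul_of_nonneg_left hu.2 hb.le)) (hGnn u)
        have key3 : (∫ r in (x-h)..x, Real.exp (b*x) * G r)
            = Real.exp (b*x) * (F x - F (x-h)) := by
          rw [intervalIntegral.integral_const_mul, ← hFadd]
        have key4 := hW x hxT
        have key5 : S (x-h) ≤ C * Real.exp (b*(x-h)) :=
          ih (x-h) (by linarith) (by linarith)
        have key6 : Real.exp (b*(x-h)) = Real.exp (b*x) * Real.exp (-3) := by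
          rw [← Real.exp_add]
          congr 1
          have hb' : b*(x-h) = b*x - b*h := by ring
          rw [hb', hbh]; ring
        rw [key6] at key5
        have kpos : (0:ℝ) < Real.exp (b*x) := Real.exp_pos _
        have k7 : Real.exp (b*x) * (F x - F (x-h))
            ≤ Real.exp (b*x) * (316*π/9*h^2) :=
          mul_le_mul_of_nonneg_left key4 kpos.le
        have k9 : C * (Real.exp (b*x) * Real.exp (-3))
            + Real.exp (b*x) * (316*π/9*h^2) = C * Real.exp (b*x) := by
          linear_combination Real.exp (b*x) * hCkey
        linarith [key1, key2, key3.le, key3.ge, key5, k7, k9]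
  obtain ⟨n, hn⟩ := exists_nat_ge (T/h)
  have hST := hSkey n T le_rfl ((div_le_iff₀ hhpos).mp hn)
  have hfin : (∫ r in (0:ℝ)..T, L r) = S T := by
    rw [hSdef]
    apply intervalIntegral.integral_congr
    intro r hr
    rw [Set.uIcc_of_le hT0.le] at hr
    show L r = Real.exp (b*r) * G r
    rw [hGeq r hr.1 hr.2, ← mul_assoc, ← Real.exp_add]
    rw [show b*r + -b*r = 0 from by ring, Real.exp_zero, one_mul]
  rw [hfin]
  exact hST
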